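/- Finite type invariants form a complete invariant for cyclic equivalence classes of signed words: if w₁ and w₂ are signed words such that v(w₁) = v(w₂) for every finite type invariant v (of every degree), then w₁ and w₂ are cyclically equivalent. -/

import Mathlib

/-- Letters are indexed by natural numbers; a signed letter carries a sign
(`true` = `+`, `false` = `−`). -/
abbrev Letter : Type := ℕ × Bool

/-- A signed word: every entry occurs exactly twice, and the two occurrences of
any letter carry the same sign. -/
def IsSignedWord (w : List Letter) : Prop :=
  ∀ p ∈ w, w.count p = 2 ∧ ∀ q ∈ w, q.1 = p.1 → q.2 = p.2

/-- Signed words (concrete representatives; isomorphism is subsumed by cyclic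
equivalence below). -/
def SignedWord : Type := {w : List Letter // IsSignedWord w}

/-- The set of letters occurring in a list of signed letters. -/
def lettersL (w : List Letter) : Finset ℕ := (w.map Prod.fst).toFinset

/-- The set of letters of a signed word. -/
def SignedWord.letters (w : SignedWord) : Finset ℕ := lettersL w.1

/-- The number of (distinct) letters of a signed word. -/
def SignedWord.numLetters (w : SignedWord) : ℕ := w.letters.card

theorem isSignedWord_filter (q : ℕ → Bool) {w : List Letter} (hw : IsSignedWord w) :
    IsSignedWord (w.filter fun p => q p.1) := by
  intro p hp
  rw [List.mem_filter] at hp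
  refine ⟨?_, fun r hr => (hw p hp.1).2 r (List.mem_filter.mp hr).1⟩
  rw [List.count_filter (p := fun r : Letter => q r.1) hp.2]
  exact (hw p hp.1).1

/-- Delete both occurrences of every letter of `T` from `w`. -/
def SignedWord.delete (w : SignedWord) (T : Finset ℕ) : SignedWord :=
  ⟨w.1.filter fun p => decide (p.1 ∉ T), isSignedWord_filter (fun a => decide (a ∉ T)) w.2⟩

/-- The induced signed subword of `w` on a set `U` of letters. -/
def SignedWord.restrict (w : SignedWord) (U : Finset ℕ) : SignedWord :=
  ⟨w.1.filter fun p => decide (p.1 ∈ U), isSignedWord_filter (fun a => decide (a ∈ U)) w.2⟩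

/-- Sign-preserving relabeling of letters. -/
def Iso (w w' : List Letter) : Prop :=
  ∃ f : ℕ ≃ ℕ, w' = w.map fun p => (f p.1, p.2)

/-- The basic move `A^ε x A^ε y ↦ x A^(−ε) y A^(−ε)`. -/
def Move (w w' : List Letter) : Prop :=
  ∃ (a : ℕ) (s : Bool) (x y : List Letter),
    w = (a, s) :: (x ++ (a, s) :: y) ∧ w' = x ++ (a, !s) :: (y ++ [(a, !s)])

/-- Cyclic equivalence of signed words: the equivalence relation generated by
isomorphism together with the basic move. -/
def CyclicEquivL : List Letter → List Letter → Prop :=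
  Relation.EqvGen fun w w' => Iso w w' ∨ Move w w'

/-- Cyclic equivalence of signed words. -/
def SignedWord.CyclicEquiv (w w' : SignedWord) : Prop := CyclicEquivL w.1 w'.1

/-- A cyclic equivalence invariant with values in `F`. -/
def WordInvariant (F : Type*) [Field F] (v : SignedWord → F) : Prop :=
  ∀ w w' : SignedWord, w.CyclicEquiv w' → v w = v w'

/-- The prolongation of `v` to the singular signed word `(w, S)` (the letters of
`S` being declared singular), given by inclusion–exclusion. -/
def prolong (F : Type*) [Field F] (v : SignedWord → F) (w : SignedWord) (S : Finset ℕ) : F :=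
  ∑ T ∈ S.powerset, (-1 : F) ^ T.card * v (w.delete T)

/-- `v` is a finite type invariant of degree ≤ `n`: it is a cyclic equivalence
invariant whose prolongation vanishes on every singular signed word with more
than `n` singular letters. -/
def FiniteTypeLe (F : Type*) [Field F] (n : ℕ) (v : SignedWord → F) : Prop :=
  WordInvariant F v ∧
    ∀ (w : SignedWord) (S : Finset ℕ), S ⊆ w.letters → n < S.card →
      prolong F v w S = 0

/-- The empty signed word `φ`. -/
def wordEmpty : SignedWord := ⟨[], by intro p hp; simp at hp⟩

/-- The one-letter positive signed word `AA`. -/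
def wordAA : SignedWord := ⟨[(0, true), (0, true)], by unfold IsSignedWord; decide⟩

/-- The one-letter negative signed word `ĀĀ`. -/
def wordAAneg : SignedWord := ⟨[(0, false), (0, false)], by unfold IsSignedWord; decide⟩

/-- The two-letter signed word `AABB`. -/
def wordAABB : SignedWord := ⟨[(0, true), (0, true), (1, true), (1, true)], by unfold IsSignedWord; decide⟩

/-- The two-letter signed word `AAB̄B̄`. -/
def wordAABnBn : SignedWord := ⟨[(0, true), (0, true), (1, false), (1, false)], by unfold IsSignedWord; decide⟩

/-- The two-letter signed word `AB̄B̄A`. -/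
def wordABnBnA : SignedWord := ⟨[(0, true), (1, false), (1, false), (0, true)], by unfold IsSignedWord; decide⟩

/-- The two-letter signed word `ABAB`. -/
def wordABAB : SignedWord := ⟨[(0, true), (1, true), (0, true), (1, true)], by unfold IsSignedWord; decide⟩

/-- The underlying list of the word `A₁A₁A₂A₂…AₙAₙ` (all letters positive). -/
def wListN (n : ℕ) : List Letter := (List.range n).flatMap fun i => [(i, true), (i, true)]

/-- `Ncount u w`: the number of `k`-element subsets of the letters of `w`
(`k` = number of letters of `u`) whose induced signed subword is cyclically
equivalent to (an isomorphic copy of) `u`. -/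
noncomputable def Ncount (u w : SignedWord) : ℕ := by
  classical
  exact (w.letters.powerset.filter fun U =>
    U.card = u.numLetters ∧ (w.restrict U).CyclicEquiv u).card

theorem prolong_add (F : Type*) [Field F] (v₁ v₂ : SignedWord → F) (w : SignedWord) (S : Finset ℕ) :
    prolong F (v₁ + v₂) w S = prolong F v₁ w S + prolong F v₂ w S := by
  simp [prolong, ← Finset.sum_add_distrib, mul_add]

theorem prolong_smul (F : Type*) [Field F] (c : F) (v : SignedWord → F) (w : SignedWord) (S : Finset ℕ) :
    prolong F (c • v) w S = c * prolong F v w S := by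
  rw [prolong, prolong, Finset.mul_sum]
  exact Finset.sum_congr rfl fun T _ => by simp [mul_left_comm]

/-- The `F`-vector space `Vₙ` of finite type invariants of degree ≤ `n`. -/
def Vn (F : Type*) [Field F] (n : ℕ) : Submodule F (SignedWord → F) where
  carrier := {v | FiniteTypeLe F n v}
  add_mem' := by
    rintro v₁ v₂ ⟨h1, h1'⟩ ⟨h2, h2'⟩
    refine ⟨fun w w' h => by simp [h1 w w' h, h2 w w' h], fun w S hS hc => ?_⟩
    rw [prolong_add, h1' w S hS hc, h2' w S hS hc, add_zero]
  zero_mem' := ⟨fun _ _ _ => rfl, fun w S hS hc => by simp [prolong]⟩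
  smul_mem' := by
    rintro c v ⟨h, h'⟩
    refine ⟨fun w w' hww => by simp [h w w' hww], fun w S hS hc => ?_⟩
    rw [prolong_smul, h' w S hS hc, mul_zero]

/-- Cyclic equivalence as a setoid on signed words. -/
def cycSetoid : Setoid SignedWord :=
  ⟨SignedWord.CyclicEquiv, fun w => Relation.EqvGen.refl w.1,
    fun h => Relation.EqvGen.symm _ _ h, fun h h' => Relation.EqvGen.trans _ _ _ h h'⟩



section Aux

open Relation Finset

lemma cyc_refl (w : List Letter) : CyclicEquivL w w := EqvGen.refl w
lemma cyc_symm {w w' : List Letter} (h : CyclicEquivL w w') : CyclicEquivL w' w :=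
  EqvGen.symm _ _ h
lemma cyc_trans {a b c : List Letter} (h : CyclicEquivL a b) (h' : CyclicEquivL b c) :
    CyclicEquivL a c := EqvGen.trans _ _ _ h h'

lemma mem_lettersL {w : List Letter} {n : ℕ} : n ∈ lettersL w ↔ ∃ p ∈ w, p.1 = n := by
  simp [lettersL]

open scoped Classical in
/-- list-level version of `Ncount`. -/
noncomputable def NcountL (u : SignedWord) (w : List Letter) : ℕ :=
  ((lettersL w).powerset.filter fun U =>
    U.card = u.numLetters ∧ CyclicEquivL (w.filter fun p => decide (p.1 ∈ U)) u.1).card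

lemma ncount_eq (u w : SignedWord) : Ncount u w = NcountL u w.1 := by
  unfold Ncount NcountL
  congr 1

lemma lettersL_move (a : ℕ) (s : Bool) (x y : List Letter) :
    lettersL ((a, s) :: (x ++ (a, s) :: y)) = lettersL (x ++ (a, !s) :: (y ++ [(a, !s)])) := by
  unfold lettersL
  simp only [List.map_cons, List.map_append, List.map_cons, List.map_nil,
    List.toFinset_cons, List.toFinset_append]
  ext n
  simp only [Finset.mem_insert, Finset.mem_union, List.toFinset_cons, List.toFinset_nil,
    Finset.union_empty, Finset.mem_insert, Finset.notMem_empty, Finset.mem_singleton]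
  tauto

lemma filter_move (a : ℕ) (s : Bool) (x y : List Letter) (U : Finset ℕ)
    [DecidablePred (· ∈ U)] :
    CyclicEquivL (((a, s) :: (x ++ (a, s) :: y)).filter fun p => decide (p.1 ∈ U))
      ((x ++ (a, !s) :: (y ++ [(a, !s)])).filter fun p => decide (p.1 ∈ U)) := by
  by_cases ha : a ∈ U
  · refine EqvGen.rel _ _ (Or.inr ⟨a, s, x.filter fun p => decide (p.1 ∈ U),
      y.filter fun p => decide (p.1 ∈ U), ?_, ?_⟩) <;>
      simp [List.filter_cons, List.filter_append, ha]
  · have h1 : ((a, s) :: (x ++ (a, s) :: y)).filter (fun p => decide (p.1 ∈ U)) =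
        (x.filter fun p => decide (p.1 ∈ U)) ++ (y.filter fun p => decide (p.1 ∈ U)) := by
      simp [List.filter_cons, List.filter_append, ha]
    have h2 : ((x ++ (a, !s) :: (y ++ [(a, !s)]))).filter (fun p => decide (p.1 ∈ U)) =
        (x.filter fun p => decide (p.1 ∈ U)) ++ (y.filter fun p => decide (p.1 ∈ U)) := by
      simp [List.filter_cons, List.filter_append, ha]
    rw [h1, h2]
    exact cyc_refl _

lemma lettersL_map (f : ℕ ≃ ℕ) (w : List Letter) :
    lettersL (w.map fun p => (f p.1, p.2)) = (lettersL w).image f := by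
  unfold lettersL
  rw [List.map_map]
  have he : (Prod.fst ∘ fun p : Letter => (f p.1, p.2)) = f ∘ Prod.fst := rfl
  rw [he, ← List.map_map]
  ext n
  simp

lemma filter_iso (f : ℕ ≃ ℕ) (w : List Letter) (U : Finset ℕ)
    [DecidablePred (· ∈ U)] [DecidablePred (· ∈ U.image f)] :
    ((w.map fun p => (f p.1, p.2)).filter fun p => decide (p.1 ∈ U.image f)) =
      ((w.filter fun p => decide (p.1 ∈ U)).map fun p => (f p.1, p.2)) := by
  rw [List.filter_map]
  congr 1
  apply List.filter_congr
  intro p _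
  simp only [Function.comp_apply]
  congr 1
  simp only [eq_iff_iff, Finset.mem_image]
  constructor
  · rintro ⟨m, hm, he⟩
    rwa [f.injective he] at hm
  · exact fun hm => ⟨p.1, hm, rfl⟩

lemma ncountL_gen (u : SignedWord) {w w' : List Letter} (h : Iso w w' ∨ Move w w') :
    NcountL u w = NcountL u w' := by
  classical
  rcases h with ⟨f, rfl⟩ | ⟨a, s, x, y, rfl, rfl⟩
  · -- isomorphism case
    unfold NcountL
    refine Finset.card_bij' (fun U _ => U.image f) (fun U _ => U.image f.symm) ?_ ?_ ?_ ?_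
    · intro U hU
      simp only [Finset.mem_filter, Finset.mem_powerset] at hU ⊢
      obtain ⟨hsub, hcard, hequiv⟩ := hU
      refine ⟨?_, ?_, ?_⟩
      · rw [lettersL_map]
        exact Finset.image_subset_image hsub
      · rw [Finset.card_image_of_injective _ f.injective, hcard]
      · have := filter_iso f w U
        rw [this]
        refine cyc_trans (cyc_symm ?_) hequiv
        exact EqvGen.rel _ _ (Or.inl ⟨f, rfl⟩)
    · intro U hU
      simp only [Finset.mem_filter, Finset.mem_powerset, lettersL_map] at hU ⊢
      obtain ⟨hsub, hcard, hequiv⟩ := hU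
      refine ⟨?_, ?_, ?_⟩
      · intro n hn
        obtain ⟨m, hm, rfl⟩ := Finset.mem_image.mp hn
        obtain ⟨k, hk, hke⟩ := Finset.mem_image.mp (hsub hm)
        rw [← hke]
        simpa using hk
      · rw [Finset.card_image_of_injective _ f.symm.injective, hcard]
      · have hUi : (U.image f.symm).image f = U := by
          rw [Finset.image_image]
          simp [Function.comp_def]
        have := filter_iso f w (U.image f.symm)
        rw [hUi] at this
        rw [this] at hequiv
        refine cyc_trans ?_ hequiv
        exact EqvGen.rel _ _ (Or.inl ⟨f, rfl⟩)
    · intro U _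
      rw [Finset.image_image]
      simp [Function.comp_def]
    · intro U _
      rw [Finset.image_image]
      simp [Function.comp_def]
  · -- move case
    unfold NcountL
    congr 1
    ext U
    simp only [Finset.mem_filter, Finset.mem_powerset, lettersL_move a s x y]
    refine and_congr Iff.rfl (and_congr Iff.rfl ?_)
    constructor
    · exact fun he => cyc_trans (cyc_symm (filter_move a s x y U)) he
    · exact fun he => cyc_trans (filter_move a s x y U) he

lemma ncountL_invariant (u : SignedWord) {w w' : List Letter} (h : CyclicEquivL w w') :
    NcountL u w = NcountL u w' := by
  induction h with
  | rel _ _ hr => exact ncountL_gen u hr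
  | refl _ => rfl
  | symm _ _ _ ih => exact ih.symm
  | trans _ _ _ _ _ ih1 ih2 => exact ih1.trans ih2

lemma letters_delete (w : SignedWord) (T : Finset ℕ) :
    (w.delete T).letters = w.letters \ T := by
  ext n
  simp only [SignedWord.letters, SignedWord.delete, mem_lettersL, Finset.mem_sdiff,
    List.mem_filter, decide_eq_true_eq]
  constructor
  · rintro ⟨p, ⟨hp, hpt⟩, rfl⟩
    exact ⟨⟨p, hp, rfl⟩, hpt⟩
  · rintro ⟨⟨p, hp, rfl⟩, hnt⟩
    exact ⟨p, ⟨hp, hnt⟩, rfl⟩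

lemma restrict_delete (w : SignedWord) {T U : Finset ℕ} (hUT : Disjoint U T) :
    ((w.delete T).restrict U).1 = (w.restrict U).1 := by
  show ((w.1.filter _).filter _) = _
  rw [List.filter_filter]
  apply List.filter_congr
  intro p _
  by_cases hp : p.1 ∈ U
  · simp [hp, Finset.disjoint_left.mp hUT hp]
  · simp [hp]

open scoped Classical in
lemma ncount_delete (u w : SignedWord) (T : Finset ℕ) :
    Ncount u (w.delete T) =
      ((w.letters.powerset.filter fun U =>
        U.card = u.numLetters ∧ (w.restrict U).CyclicEquiv u).filter
        fun U => Disjoint U T).card := by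
  unfold Ncount
  congr 1
  ext U
  simp only [Finset.mem_filter, Finset.mem_powerset, letters_delete, Finset.subset_sdiff]
  constructor
  · rintro ⟨⟨hsub, hdisj⟩, hcard, hequiv⟩
    refine ⟨⟨hsub, hcard, ?_⟩, hdisj⟩
    show CyclicEquivL (w.restrict U).1 u.1
    rw [← restrict_delete w hdisj]
    exact hequiv
  · rintro ⟨⟨hsub, hcard, hequiv⟩, hdisj⟩
    refine ⟨⟨hsub, hdisj⟩, hcard, ?_⟩
    show CyclicEquivL ((w.delete T).restrict U).1 u.1
    rw [restrict_delete w hdisj]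
    exact hequiv

lemma sum_pow_neg_one (F : Type*) [Field F] {s : Finset ℕ} (hs : s.Nonempty) :
    ∑ t ∈ s.powerset, (-1 : F) ^ t.card = 0 := by
  have h := Finset.sum_powerset_neg_one_pow_card_of_nonempty hs
  have : ((∑ m ∈ s.powerset, (-1 : ℤ) ^ m.card : ℤ) : F) =
      ∑ t ∈ s.powerset, (-1 : F) ^ t.card := by
    push_cast
    rfl
  rw [← this, h, Int.cast_zero]

lemma prolong_ncount (F : Type*) [Field F] (u w : SignedWord) (S : Finset ℕ)
    (hn : u.numLetters < S.card) :
    prolong F (fun w => ((Ncount u w : ℕ) : F)) w S = 0 := by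
  classical
  set A := w.letters.powerset.filter fun U =>
    U.card = u.numLetters ∧ (w.restrict U).CyclicEquiv u with hA
  have hcd : ∀ T : Finset ℕ, ((Ncount u (w.delete T) : ℕ) : F) =
      ∑ U ∈ A, if Disjoint U T then (1 : F) else 0 := by
    intro T
    rw [ncount_delete, Finset.sum_boole]
  unfold prolong
  calc ∑ T ∈ S.powerset, (-1 : F) ^ T.card * ((Ncount u (w.delete T) : ℕ) : F)
      = ∑ T ∈ S.powerset, ∑ U ∈ A, (-1 : F) ^ T.card * (if Disjoint U T then 1 else 0) := by
        refine Finset.sum_congr rfl fun T _ => ?_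
        rw [hcd T, Finset.mul_sum]
    _ = ∑ U ∈ A, ∑ T ∈ S.powerset, (-1 : F) ^ T.card * (if Disjoint U T then 1 else 0) :=
        Finset.sum_comm
    _ = 0 := by
        refine Finset.sum_eq_zero fun U hU => ?_
        have hcardU : U.card = u.numLetters := (Finset.mem_filter.mp hU).2.1
        have key : ∀ T ∈ S.powerset, (-1 : F) ^ T.card * (if Disjoint U T then 1 else 0) =
            if Disjoint U T then (-1 : F) ^ T.card else 0 := by
          intro T _
          split <;> simp
        rw [Finset.sum_congr rfl key, ← Finset.sum_filter]
        have hps : S.powerset.filter (fun T => Disjoint U T) = (S \ U).powerset := by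
          ext T
          simp only [Finset.mem_filter, Finset.mem_powerset, Finset.subset_sdiff]
          exact ⟨fun ⟨h1, h2⟩ => ⟨h1, h2.symm⟩, fun ⟨h1, h2⟩ => ⟨h1, h2.symm⟩⟩
        rw [hps]
        apply sum_pow_neg_one
        rw [← Finset.card_pos]
        have hsub : ¬ S ⊆ U := fun hc =>
          absurd (Finset.card_le_card hc) (by omega)
        obtain ⟨n, hnS, hnU⟩ := Finset.not_subset.mp hsub
        exact Finset.card_pos.mpr ⟨n, Finset.mem_sdiff.mpr ⟨hnS, hnU⟩⟩

lemma ncount_finiteType (F : Type*) [Field F] (u : SignedWord) :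
    FiniteTypeLe F u.numLetters (fun w => ((Ncount u w : ℕ) : F)) := by
  constructor
  · intro w w' hww
    have : Ncount u w = Ncount u w' := by
      rw [ncount_eq, ncount_eq]
      exact ncountL_invariant u hww
    simp [this]
  · intro w S _ hc
    exact prolong_ncount F u w S hc

lemma restrict_letters_self (w : SignedWord) : (w.restrict w.letters).1 = w.1 := by
  apply List.filter_eq_self.mpr
  intro p hp
  simp only [decide_eq_true_eq]
  exact mem_lettersL.mpr ⟨p, hp, rfl⟩

lemma ncount_self (u : SignedWord) : Ncount u u = 1 := by
  classical
  unfold Ncount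
  have : (u.letters.powerset.filter fun U =>
      U.card = u.numLetters ∧ (u.restrict U).CyclicEquiv u) = {u.letters} := by
    ext U
    simp only [Finset.mem_filter, Finset.mem_powerset, Finset.mem_singleton]
    constructor
    · rintro ⟨hsub, hcard, _⟩
      exact Finset.eq_of_subset_of_card_le hsub (le_of_eq hcard.symm)
    · rintro rfl
      refine ⟨le_refl _, rfl, ?_⟩
      show CyclicEquivL (u.restrict u.letters).1 u.1
      rw [restrict_letters_self]
      exact cyc_refl _
  rw [this]
  rfl

lemma ncount_pos {F : Type*} [Field F] {u w : SignedWord}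
    (h : ((Ncount u w : ℕ) : F) = ((Ncount u u : ℕ) : F)) :
    ∃ U ⊆ w.letters, U.card = u.numLetters ∧ (w.restrict U).CyclicEquiv u := by
  classical
  rw [ncount_self] at h
  have hne : Ncount u w ≠ 0 := by
    intro h0
    rw [h0] at h
    simp at h
  unfold Ncount at hne
  obtain ⟨U, hU⟩ := Finset.card_pos.mp (Nat.pos_of_ne_zero hne)
  simp only [Finset.mem_filter, Finset.mem_powerset] at hU
  exact ⟨U, hU.1, hU.2⟩

end Aux

/-- finite type invariants form a complete invariant for cyclic
equivalence classes of signed words. -/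
theorem finiteType_complete (F : Type*) [Field F] (w₁ w₂ : SignedWord)
    (h : ∀ (n : ℕ) (v : SignedWord → F), FiniteTypeLe F n v → v w₁ = v w₂) :
    w₁.CyclicEquiv w₂ := by
  classical
  have h1 := h w₁.numLetters (fun w => ((Ncount w₁ w : ℕ) : F)) (ncount_finiteType F w₁)
  have h2 := h w₂.numLetters (fun w => ((Ncount w₂ w : ℕ) : F)) (ncount_finiteType F w₂)
  obtain ⟨U, hUsub, hUcard, hUequiv⟩ := ncount_pos (u := w₁) (w := w₂) h1.symm
  obtain ⟨U', hU'sub, hU'card, _⟩ := ncount_pos (u := w₂) (w := w₁) h2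
  have hn12 : w₁.numLetters ≤ w₂.numLetters := hUcard ▸ Finset.card_le_card hUsub
  have hn21 : w₂.numLetters ≤ w₁.numLetters := hU'card ▸ Finset.card_le_card hU'sub
  have hnum : w₂.letters.card = w₂.numLetters := rfl
  have hUeq : U = w₂.letters :=
    Finset.eq_of_subset_of_card_le hUsub (by omega)
  rw [hUeq] at hUequiv
  have : CyclicEquivL w₂.1 w₁.1 := by
    have := hUequiv
    unfold SignedWord.CyclicEquiv at this
    rwa [restrict_letters_self] at this
  exact cyc_symm this
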